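/- For a, b, c₀ ∈ ℂ, the 𝔮-module A_{a,b,c₀} is simple if and only if a ∉ ℤ, or b ∉ {0, 1}, or c₀ ≠ 0. -/

import Mathlib

/-- A `𝔮`-module: a complex vector space with operators `L m`, `H m` (`m ∈ ℤ`),
`G k` (representing `G_{k+1/2}`, `k ∈ ℤ`) and a central operator `c`, subject to
the relations of the subalgebra `𝔮` of the `N = 2` Neveu–Schwarz algebra. -/
structure QModule (V : Type) [AddCommGroup V] [Module ℂ V] where
  L : ℤ → Module.End ℂ V
  H : ℤ → Module.End ℂ V
  G : ℤ → Module.End ℂ V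
  c : Module.End ℂ V
  hcL : ∀ m : ℤ, L m * c = c * L m
  hcH : ∀ m : ℤ, H m * c = c * H m
  hcG : ∀ k : ℤ, G k * c = c * G k
  hLL : ∀ m n : ℤ, L m * L n - L n * L m =
    ((n - m : ℤ) : ℂ) • L (m + n) +
      (if m + n = 0 then (((n ^ 3 - n : ℤ) : ℂ) / 12) else 0) • c
  hHH : ∀ m n : ℤ, H m * H n - H n * H m =
    (if m + n = 0 then ((m : ℂ) / 3) else 0) • c
  hLH : ∀ m n : ℤ, L m * H n - H n * L m = (n : ℂ) • H (m + n)
  hLG : ∀ m k : ℤ, L m * G k - G k * L m = (((2 * k + 1 - m : ℤ) : ℂ) / 2) • G (k + m)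
  hHG : ∀ m k : ℤ, H m * G k - G k * H m = G (m + k)
  hGG : ∀ k l : ℤ, G k * G l + G l * G k = 0

/-- A weight `𝔮`-module: the grading is over `(1/2)ℤ`, encoded by indexing the
weight spaces by `n : ℤ`, where `wt n` is the weight space of weight `n/2`. -/
structure WeightQModule (V : Type) [AddCommGroup V] [Module ℂ V] extends QModule V where
  wt : ℤ → Submodule ℂ V
  internal : DirectSum.IsInternal wt
  hLwt : ∀ m n : ℤ, ∀ v ∈ wt n, L m v ∈ wt (n + 2 * m)
  hHwt : ∀ m n : ℤ, ∀ v ∈ wt n, H m v ∈ wt (n + 2 * m)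
  hGwt : ∀ k n : ℤ, ∀ v ∈ wt n, G k v ∈ wt (n + 2 * k + 1)
  hcwt : ∀ n : ℤ, ∀ v ∈ wt n, c v ∈ wt n

/-- Cuspidal: the dimensions of all weight spaces are uniformly bounded. -/
def WeightQModule.IsCuspidal {V : Type} [AddCommGroup V] [Module ℂ V]
    (M : WeightQModule V) : Prop :=
  ∃ p : ℕ, ∀ n : ℤ, Module.rank ℂ (M.wt n) ≤ (p : Cardinal)

/-- A submodule of a weight `𝔮`-module: a subspace invariant under all the
operators which is the sum of its intersections with the weight spaces. -/
def WeightQModule.IsSub {V : Type} [AddCommGroup V] [Module ℂ V]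
    (M : WeightQModule V) (W : Submodule ℂ V) : Prop :=
  (∀ m : ℤ, ∀ x ∈ W, M.L m x ∈ W) ∧ (∀ m : ℤ, ∀ x ∈ W, M.H m x ∈ W) ∧
    (∀ k : ℤ, ∀ x ∈ W, M.G k x ∈ W) ∧ (∀ x ∈ W, M.c x ∈ W) ∧
    W = ⨆ n : ℤ, W ⊓ M.wt n

/-- Simple: nonzero with no nontrivial proper submodules. -/
def WeightQModule.IsSimple {V : Type} [AddCommGroup V] [Module ℂ V]
    (M : WeightQModule V) : Prop :=
  Nontrivial V ∧ ∀ W : Submodule ℂ V, M.IsSub W → W = ⊥ ∨ W = ⊤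

/-- The `L`-action of the module `A_{a,b,c₀}` on `ℤ →₀ ℂ` (basis `v_i = single i 1`):
`L_m v_i = (a + bm + i) v_{m+i}`. -/
noncomputable def qLab (a b : ℂ) (m : ℤ) : Module.End ℂ (ℤ →₀ ℂ) :=
  Finsupp.lsum ℂ (fun i : ℤ => (a + b * (m : ℂ) + (i : ℂ)) • Finsupp.lsingle (m + i))

/-- The `H`-action of the module `A_{a,b,c₀}`: `H_m v_i = c₀ v_{m+i}`.
(The operators `G_p` and `c` act as zero on `A_{a,b,c₀}`.) -/
noncomputable def qHc (c₀ : ℂ) (m : ℤ) : Module.End ℂ (ℤ →₀ ℂ) :=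
  Finsupp.lsum ℂ (fun i : ℤ => c₀ • Finsupp.lsingle (m + i))

/-- A subspace of `A_{a,b,c₀}` compatible with the grading: it equals the sum of
its intersections with the lines `ℂ v_i`. -/
def AGraded (W : Submodule ℂ (ℤ →₀ ℂ)) : Prop :=
  W = ⨆ i : ℤ, W ⊓ Submodule.span ℂ {Finsupp.single i (1 : ℂ)}

/-- A submodule of the 𝔮-module `A_{a,b,c₀}`: a subspace invariant under all the
operators (the operators `G_p` and `c` act as zero, so only invariance under the
`L`- and `H`-actions is nontrivial) which equals the sum of its intersections
with the lines `ℂ v_i`. -/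
def ASub (a b c₀ : ℂ) (W : Submodule ℂ (ℤ →₀ ℂ)) : Prop :=
  (∀ m : ℤ, ∀ x ∈ W, qLab a b m x ∈ W) ∧ (∀ m : ℤ, ∀ x ∈ W, qHc c₀ m x ∈ W) ∧
    AGraded W

lemma qLab_single (a b : ℂ) (m i : ℤ) :
    qLab a b m (Finsupp.single i (1:ℂ)) = (a + b*(m:ℂ) + (i:ℂ)) • Finsupp.single (m+i) (1:ℂ) := by
  rw [qLab, Finsupp.lsum_single]; simp [Finsupp.smul_single]

lemma qHc_single (c₀ : ℂ) (m i : ℤ) :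
    qHc c₀ m (Finsupp.single i (1:ℂ)) = c₀ • Finsupp.single (m+i) (1:ℂ) := by
  rw [qHc, Finsupp.lsum_single]; simp [Finsupp.smul_single]

lemma qHc_zero (m : ℤ) : qHc 0 m = 0 := by ext x : 1; simp [qHc]

lemma supported_graded (s : Set ℤ) : AGraded (Finsupp.supported ℂ ℂ s) := by
  apply le_antisymm
  · conv_lhs => rw [Finsupp.supported_eq_span_single]
    rw [Submodule.span_le]
    rintro _ ⟨i, his, rfl⟩
    refine Submodule.mem_iSup_of_mem i ⟨?_, ?_⟩
    · exact Finsupp.single_mem_supported ℂ 1 his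
    · exact Submodule.mem_span_singleton_self _
  · exact iSup_le fun i => inf_le_left

lemma supported_invariant (T : Module.End ℂ (ℤ →₀ ℂ)) (s : Set ℤ)
    (h : ∀ i ∈ s, T (Finsupp.single i 1) ∈ Finsupp.supported ℂ ℂ s) :
    ∀ x ∈ Finsupp.supported ℂ ℂ s, T x ∈ Finsupp.supported ℂ ℂ s := by
  intro x hx
  rw [Finsupp.supported_eq_span_single] at hx
  induction hx using Submodule.span_induction with
  | mem z hz => obtain ⟨i, his, rfl⟩ := hz; exact h i his
  | zero => simp only [map_zero]; exact Submodule.zero_mem _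
  | add y z _ _ hy hz => rw [map_add]; exact Submodule.add_mem _ hy hz
  | smul c y _ hy => rw [map_smul]; exact Submodule.smul_mem _ _ hy

lemma exists_k (a b : ℂ) (hb0 : b ≠ 0) (hb1 : b ≠ 1) (i j : ℤ) :
    ∃ k : ℤ, a + b * ((k:ℂ) - (i:ℂ)) + (i:ℂ) ≠ 0 ∧ a + b * ((j:ℂ) - (k:ℂ)) + (k:ℂ) ≠ 0 := by
  by_contra hcon
  push_neg at hcon
  have d : ∀ k : ℤ, (a + b * ((k:ℂ) - i) + i = 0) ∨ (a + b * ((j:ℂ) - k) + k = 0) := by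
    intro k
    by_cases e : a + b * ((k:ℂ) - i) + i = 0
    · exact Or.inl e
    · exact Or.inr (hcon k e)
  have d0 := d 0; have d1 := d 1; have d2 := d 2
  push_cast at d0 d1 d2
  rcases d0 with h0 | h0 <;> rcases d1 with h1 | h1 <;> rcases d2 with h2 | h2 <;>
    first
      | exact hb0 (by linear_combination h1 - h0)
      | exact hb0 (by linear_combination (h2 - h0)/2)
      | exact hb0 (by linear_combination h2 - h1)
      | exact hb1 (by linear_combination h0 - h1)
      | exact hb1 (by linear_combination (h0 - h2)/2)
      | exact hb1 (by linear_combination h1 - h2)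


/-- the 𝔮-module `A_{a,b,c₀}` is simple (its only submodules are
`0` and itself) if and only if `a ∉ ℤ`, or `b ∉ {0, 1}`, or `c₀ ≠ 0`. -/
theorem stmt15 (a b c₀ : ℂ) :
    (∀ W : Submodule ℂ (ℤ →₀ ℂ), ASub a b c₀ W → W = ⊥ ∨ W = ⊤) ↔
      ((∀ n : ℤ, (n : ℂ) ≠ a) ∨ (b ≠ 0 ∧ b ≠ 1) ∨ c₀ ≠ 0) := by
  constructor
  · intro hs
    by_contra hcon
    push_neg at hcon
    obtain ⟨⟨n, hn⟩, hb, hc⟩ := hcon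
    by_cases hb0 : b = 0
    · -- counterexample: supported {-n}
      set W := Finsupp.supported ℂ ℂ ({-n} : Set ℤ) with hWdef
      have hsub : ASub a b c₀ W := by
        refine ⟨?_, ?_, supported_graded _⟩
        · intro m
          apply supported_invariant
          intro i hi
          rcases hi with rfl
          rw [qLab_single]
          have : a + b * (m:ℂ) + ((-n : ℤ):ℂ) = 0 := by
            rw [hb0, ← hn]; push_cast; ring
          rw [this, zero_smul]
          exact Submodule.zero_mem _
        · intro m
          rw [hc, qHc_zero]
          intro x _
          simp only [LinearMap.zero_apply]
          exact Submodule.zero_mem _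
      rcases hs W hsub with h | h
      · have hm : Finsupp.single (-n) (1:ℂ) ∈ W := Finsupp.single_mem_supported ℂ 1 rfl
        rw [h, Submodule.mem_bot] at hm
        exact one_ne_zero (Finsupp.single_eq_zero.mp hm)
      · have hm : Finsupp.single (-n+1) (1:ℂ) ∈ W := h ▸ Submodule.mem_top
        rw [hWdef, Finsupp.mem_supported] at hm
        have := hm (by simp [Finsupp.support_single_ne_zero _ (one_ne_zero (α := ℂ))] :
          (-n+1 : ℤ) ∈ ↑(Finsupp.single (-n+1) (1:ℂ)).support)
        simp at this
    · have hb1 : b = 1 := hb hb0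
      set W := Finsupp.supported ℂ ℂ ({-n}ᶜ : Set ℤ) with hWdef
      have hsub : ASub a b c₀ W := by
        refine ⟨?_, ?_, supported_graded _⟩
        · intro m
          apply supported_invariant
          intro i hi
          rw [qLab_single]
          by_cases hmi : m + i = -n
          · have : a + b * (m:ℂ) + (i:ℂ) = 0 := by
              rw [hb1, ← hn]
              have : ((m : ℤ):ℂ) + (i:ℂ) = ((-n : ℤ):ℂ) := by
                rw [← hmi]; push_cast; ring
              push_cast at this ⊢
              linear_combination this
            rw [this, zero_smul]
            exact Submodule.zero_mem _
          · exact Submodule.smul_mem _ _ (Finsupp.single_mem_supported ℂ 1 hmi)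
        · intro m
          rw [hc, qHc_zero]
          intro x _
          simp only [LinearMap.zero_apply]
          exact Submodule.zero_mem _
      rcases hs W hsub with h | h
      · have hm : Finsupp.single (-n+1) (1:ℂ) ∈ W :=
          Finsupp.single_mem_supported ℂ 1 (by simp only [Set.mem_compl_iff, Set.mem_singleton_iff]; omega)
        rw [h, Submodule.mem_bot] at hm
        exact one_ne_zero (Finsupp.single_eq_zero.mp hm)
      · have hm : Finsupp.single (-n) (1:ℂ) ∈ W := h ▸ Submodule.mem_top
        rw [hWdef, Finsupp.mem_supported] at hm
        have := hm (by simp [Finsupp.support_single_ne_zero _ (one_ne_zero (α := ℂ))] :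
          (-n : ℤ) ∈ ↑(Finsupp.single (-n) (1:ℂ)).support)
        simp at this
  · intro h W hW
    by_cases hbot : W = ⊥
    · exact Or.inl hbot
    right
    obtain ⟨hL, hH, hGr⟩ := hW
    -- find a basis vector in W
    obtain ⟨i0, hi0⟩ : ∃ i, Finsupp.single i (1:ℂ) ∈ W := by
      by_contra hno
      push_neg at hno
      apply hbot
      have hz : ∀ i : ℤ, W ⊓ Submodule.span ℂ {Finsupp.single i (1:ℂ)} = ⊥ := by
        intro i
        rw [eq_bot_iff]
        rintro x ⟨hxW, hxs⟩
        obtain ⟨c, rfl⟩ := Submodule.mem_span_singleton.mp hxs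
        rcases eq_or_ne c 0 with rfl | hcne
        · simp
        · exact absurd ((W.smul_mem_iff hcne).mp hxW) (hno i)
      calc W = ⨆ i : ℤ, W ⊓ Submodule.span ℂ {Finsupp.single i (1:ℂ)} := hGr
        _ = ⊥ := iSup_eq_bot.mpr hz
    -- step lemmas
    have stepL : ∀ i j : ℤ, Finsupp.single i (1:ℂ) ∈ W →
        a + b * ((j:ℂ) - (i:ℂ)) + (i:ℂ) ≠ 0 → Finsupp.single j (1:ℂ) ∈ W := by
      intro i j hi hne
      have hx := hL (j - i) _ hi
      rw [qLab_single] at hx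
      rw [show j - i + i = j from by ring] at hx
      push_cast at hx
      exact (W.smul_mem_iff hne).mp hx
    have stepH : c₀ ≠ 0 → ∀ i j : ℤ, Finsupp.single i (1:ℂ) ∈ W →
        Finsupp.single j (1:ℂ) ∈ W := by
      intro hcne i j hi
      have hx := hH (j - i) _ hi
      rw [qHc_single] at hx
      rw [show j - i + i = j from by ring] at hx
      exact (W.smul_mem_iff hcne).mp hx
    have two_step : b ≠ 0 → b ≠ 1 → ∀ j : ℤ, Finsupp.single j (1:ℂ) ∈ W := by
      intro h0 h1 j
      obtain ⟨k, hk1, hk2⟩ := exists_k a b h0 h1 i0 j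
      exact stepL k j (stepL i0 k hi0 hk1) hk2
    have key : ∀ j : ℤ, Finsupp.single j (1:ℂ) ∈ W := by
      intro j
      rcases h with ha | ⟨h0, h1⟩ | hcne
      · by_cases h0 : b = 0
        · refine stepL i0 j hi0 ?_
          rw [h0]
          intro heq
          exact ha (-i0) (by push_cast; linear_combination -heq)
        · by_cases h1 : b = 1
          · refine stepL i0 j hi0 ?_
            rw [h1]
            intro heq
            exact ha (-j) (by push_cast; linear_combination -heq)
          · exact two_step h0 h1 j
      · exact two_step h0 h1 j
      · exact stepH hcne i0 j hi0
    rw [eq_top_iff]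
    rintro x -
    induction x using Finsupp.induction with
    | zero => exact W.zero_mem
    | single_add i c f _ _ ih =>
      refine W.add_mem ?_ ih
      have hsc : Finsupp.single i c = c • Finsupp.single i (1:ℂ) := by
        rw [Finsupp.smul_single, smul_eq_mul, mul_one]
      rw [hsc]
      exact W.smul_mem _ (key i)
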